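/- The vector ρ₁ := 3e_L + Σ_{{a,b}⊂{1,…,5}} e_{ab} lies in Γ^∨, spans an extremal ray of Γ^∨, and satisfies ⟨K, ρ₁⟩ = −2; hence ρ₁ is a coextremal ray of M̄_{0,6}. (Geometrically, ρ₁ is the class of the pullback of a conic under the birational morphism from M̄_{0,6} to the Igusa quartic in ℙ⁴ given by the anticanonical series.) -/

import Mathlib

noncomputable section

/-- Index in `Fin 16` of the exceptional class `E_{ab}` attached to a pair of points
(points written `0`-based as elements of `Fin 5`, assuming `a < b`):
`(0,1) ↦ 6, (0,2) ↦ 7, …, (3,4) ↦ 15`. -/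
def pairIdx : ℕ → ℕ → Fin 16
  | 0, 1 => 6
  | 0, 2 => 7
  | 0, 3 => 8
  | 0, 4 => 9
  | 1, 2 => 10
  | 1, 3 => 11
  | 1, 4 => 12
  | 2, 3 => 13
  | 2, 4 => 14
  | 3, 4 => 15
  | _, _ => 0

/-- The coordinate vector `e_L` (the class `L`). -/
def eL : Fin 16 → ℝ := Pi.single 0 1

/-- The coordinate vector `e_i` for the point `i ∈ {1,…,5}` (represented `0`-based
by `i : Fin 5`). -/
def eP (i : Fin 5) : Fin 16 → ℝ := Pi.single ⟨i.val + 1, by omega⟩ 1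

/-- The coordinate vector `e_{ab}` for a 2-element subset `{a,b} ⊂ {1,…,5}`
(represented `0`-based); symmetric in `a` and `b`. -/
def eE (a b : Fin 5) : Fin 16 → ℝ :=
  Pi.single (if a.val < b.val then pairIdx a.val b.val else pairIdx b.val a.val) 1

/-- The standard inner product on `ℝ¹⁶`. -/
def ip (x y : Fin 16 → ℝ) : ℝ := ∑ i, x i * y i

def Distinct3 (k l m : Fin 5) : Prop := k ≠ l ∧ k ≠ m ∧ l ≠ m

def Distinct5 (i j k l m : Fin 5) : Prop :=
  i ≠ j ∧ i ≠ k ∧ i ≠ l ∧ i ≠ m ∧ j ≠ k ∧ j ≠ l ∧ j ≠ m ∧ k ≠ l ∧ k ≠ m ∧ l ≠ m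

/-- The 40 classes: 25 boundary divisors and 15 fixed-point divisors `F_σ` of `M̄₀₆`. -/
def Gamma : Set (Fin 16 → ℝ) :=
  {v | (∃ i : Fin 5, v = eP i) ∨
       (∃ a b : Fin 5, a ≠ b ∧ v = eE a b) ∨
       (∃ k l m : Fin 5, Distinct3 k l m ∧
          v = eL - eP k - eP l - eP m - eE k l - eE k m - eE l m) ∨
       (∃ j a b c d : Fin 5, Distinct5 j a b c d ∧
          v = (2 : ℝ) • eL - (∑ i, eP i) - eE a c - eE a d - eE b c - eE b d)}

/-- The dual cone `Γ^∨ = {v : ⟨g,v⟩ ≥ 0 for all g ∈ Γ}`. -/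
def GammaDual : Set (Fin 16 → ℝ) := {v | ∀ gv ∈ Gamma, 0 ≤ ip gv v}
/-- The canonical class `K = -4e_L + 2(e_1 + ⋯ + e_5) + Σ_{{a,b}} e_{ab}` of `M̄₀₆`. -/
def Kcl : Fin 16 → ℝ :=
  -((4 : ℝ) • eL) + (2 : ℝ) • (∑ i, eP i) +
    ∑ a : Fin 5, ∑ b : Fin 5, if a < b then eE a b else 0

/-- A nonzero `ρ` spans an extremal ray of the convex cone `C` if `ρ ∈ C` and
whenever `v₁, v₂ ∈ C` with `v₁ + v₂ ∈ ℝ₊·ρ`, both `v₁` and `v₂` lie in `ℝ₊·ρ`. -/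
def SpansExtremalRay (C : Set (Fin 16 → ℝ)) (ρ : Fin 16 → ℝ) : Prop :=
  ρ ≠ 0 ∧ ρ ∈ C ∧ ∀ v₁ v₂, v₁ ∈ C → v₂ ∈ C →
    (∃ t : ℝ, 0 ≤ t ∧ v₁ + v₂ = t • ρ) →
    ((∃ t : ℝ, 0 ≤ t ∧ v₁ = t • ρ) ∧ (∃ t : ℝ, 0 ≤ t ∧ v₂ = t • ρ))
/-- `ρ₁ = 3e_L + Σ_{{a,b} ⊂ {1,…,5}} e_{ab}`. -/
def ρ₁ : Fin 16 → ℝ :=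
  (3 : ℝ) • eL + ∑ a : Fin 5, ∑ b : Fin 5, if a < b then eE a b else 0

lemma ip_single (j : Fin 16) (c : ℝ) (v : Fin 16 → ℝ) : ip (Pi.single j c) v = c * v j := by
  simp [ip, Pi.single_apply, ite_mul, Finset.sum_ite_eq]

lemma ip_sub (x y v : Fin 16 → ℝ) : ip (x - y) v = ip x v - ip y v := by
  simp [ip, sub_mul, Finset.sum_sub_distrib]

lemma ip_add (x y v : Fin 16 → ℝ) : ip (x + y) v = ip x v + ip y v := by
  simp [ip, add_mul, Finset.sum_add_distrib]

lemma ip_smul (c : ℝ) (x v : Fin 16 → ℝ) : ip (c • x) v = c * ip x v := by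
  simp only [ip, Finset.mul_sum, Pi.smul_apply, smul_eq_mul]
  exact Finset.sum_congr rfl fun i _ => by ring

lemma ip_neg (x v : Fin 16 → ℝ) : ip (-x) v = - ip x v := by
  simp [ip]

lemma ip_sum {α : Type*} (s : Finset α) (f : α → Fin 16 → ℝ) (v : Fin 16 → ℝ) :
    ip (∑ a ∈ s, f a) v = ∑ a ∈ s, ip (f a) v := by
  simp only [ip, Finset.sum_apply, Finset.sum_mul]
  rw [Finset.sum_comm]

lemma ip_add_right (x u v : Fin 16 → ℝ) : ip x (u + v) = ip x u + ip x v := by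
  simp [ip, mul_add, Finset.sum_add_distrib]

lemma ip_smul_right (c : ℝ) (x v : Fin 16 → ℝ) : ip x (c • v) = c * ip x v := by
  simp only [ip, Finset.mul_sum, Pi.smul_apply, smul_eq_mul]
  exact Finset.sum_congr rfl fun i _ => by ring

lemma eE01 : eE 0 1 = Pi.single 6 1 := rfl
lemma eE02 : eE 0 2 = Pi.single 7 1 := rfl
lemma eE03 : eE 0 3 = Pi.single 8 1 := rfl
lemma eE04 : eE 0 4 = Pi.single 9 1 := rfl
lemma eE12 : eE 1 2 = Pi.single 10 1 := rfl
lemma eE13 : eE 1 3 = Pi.single 11 1 := rfl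
lemma eE14 : eE 1 4 = Pi.single 12 1 := rfl
lemma eE23 : eE 2 3 = Pi.single 13 1 := rfl
lemma eE24 : eE 2 4 = Pi.single 14 1 := rfl
lemma eE34 : eE 3 4 = Pi.single 15 1 := rfl
lemma eP0 : eP 0 = Pi.single 1 1 := rfl
lemma eP1 : eP 1 = Pi.single 2 1 := rfl
lemma eP2 : eP 2 = Pi.single 3 1 := rfl
lemma eP3 : eP 3 = Pi.single 4 1 := rfl
lemma eP4 : eP 4 = Pi.single 5 1 := rfl

lemma sum_pairs : (∑ a : Fin 5, ∑ b : Fin 5, if a < b then eE a b else 0) =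
    eE 0 1 + eE 0 2 + eE 0 3 + eE 0 4 + eE 1 2 + eE 1 3 + eE 1 4 + eE 2 3 + eE 2 4 + eE 3 4 := by
  simp only [Fin.sum_univ_five]
  norm_num
  abel_nf
  simp only [zero_add]

def Rv : Fin 16 → ℝ := fun j => if j.val = 0 then 3 else if j.val ≤ 5 then 0 else 1

lemma rho_eq : ρ₁ = Rv := by
  rw [ρ₁, sum_pairs, eE01, eE02, eE03, eE04, eE12, eE13, eE14, eE23, eE24, eE34]
  funext j
  fin_cases j <;>
    simp (config := { decide := true }) [Rv, eL, Pi.single_apply]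

lemma ip_eL_rho : ip eL ρ₁ = 3 := by
  rw [eL, ip_single, one_mul, rho_eq]; norm_num [Rv]

lemma ip_eP_rho (i : Fin 5) : ip (eP i) ρ₁ = 0 := by
  rw [eP, ip_single, one_mul, rho_eq]
  show (if i.val + 1 = 0 then (3:ℝ) else if i.val + 1 ≤ 5 then 0 else 1) = 0
  rw [if_neg (by omega), if_pos (by omega)]

lemma ip_eE_rho (a b : Fin 5) (h : a ≠ b) : ip (eE a b) ρ₁ = 1 := by
  rw [eE, ip_single, one_mul, rho_eq]
  have h6 : 6 ≤ (if a.val < b.val then pairIdx a.val b.val else pairIdx b.val a.val).val := by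
    revert h; fin_cases a <;> fin_cases b <;> decide
  show (if (if a.val < b.val then pairIdx a.val b.val else pairIdx b.val a.val).val = 0
      then (3:ℝ) else if (if a.val < b.val then pairIdx a.val b.val else pairIdx b.val a.val).val ≤ 5
      then 0 else 1) = 1
  rw [if_neg (by omega), if_neg (by omega)]

lemma ip_sumeP_rho : ip (∑ i, eP i) ρ₁ = 0 := by
  rw [ip_sum]
  exact Finset.sum_eq_zero fun i _ => ip_eP_rho i

lemma ip_triple_rho (k l m : Fin 5) (hd : Distinct3 k l m) :
    ip (eL - eP k - eP l - eP m - eE k l - eE k m - eE l m) ρ₁ = 0 := by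
  obtain ⟨h1, h2, h3⟩ := hd
  simp only [ip_sub, ip_eL_rho, ip_eP_rho, ip_eE_rho k l h1, ip_eE_rho k m h2, ip_eE_rho l m h3]
  ring

lemma ip_F_rho (a b c d : Fin 5) (hac : a ≠ c) (had : a ≠ d) (hbc : b ≠ c) (hbd : b ≠ d) :
    ip ((2 : ℝ) • eL - (∑ i, eP i) - eE a c - eE a d - eE b c - eE b d) ρ₁ = 2 := by
  simp only [ip_sub, ip_smul, ip_eL_rho, ip_sumeP_rho, ip_eE_rho a c hac, ip_eE_rho a d had,
    ip_eE_rho b c hbc, ip_eE_rho b d hbd]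
  ring

lemma rho_mem : ρ₁ ∈ GammaDual := by
  intro g hg
  rcases hg with ⟨i, rfl⟩ | ⟨a, b, hab, rfl⟩ | ⟨k, l, m, hd, rfl⟩ | ⟨j, a, b, c, d, hd, rfl⟩
  · rw [ip_eP_rho]
  · rw [ip_eE_rho a b hab]; norm_num
  · rw [ip_triple_rho k l m hd]
  · rw [ip_F_rho a b c d hd.2.2.2.2.2.1 hd.2.2.2.2.2.2.1 hd.2.2.2.2.2.2.2.1 hd.2.2.2.2.2.2.2.2.1]
    norm_num

lemma key (v : Fin 16 → ℝ)
    (hp : ∀ i : Fin 5, ip (eP i) v = 0)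
    (ht : ∀ k l m : Fin 5, Distinct3 k l m →
      ip (eL - eP k - eP l - eP m - eE k l - eE k m - eE l m) v = 0) :
    v = v 6 • ρ₁ := by
  have h1 : v 1 = 0 := by have := hp 0; rwa [eP0, ip_single, one_mul] at this
  have h2 : v 2 = 0 := by have := hp 1; rwa [eP1, ip_single, one_mul] at this
  have h3 : v 3 = 0 := by have := hp 2; rwa [eP2, ip_single, one_mul] at this
  have h4 : v 4 = 0 := by have := hp 3; rwa [eP3, ip_single, one_mul] at this
  have h5 : v 5 = 0 := by have := hp 4; rwa [eP4, ip_single, one_mul] at this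
  have d3 : ∀ k l m : Fin 5, k ≠ l → k ≠ m → l ≠ m → Distinct3 k l m :=
    fun _ _ _ a b c => ⟨a, b, c⟩
  have T012 := ht 0 1 2 (d3 _ _ _ (by decide) (by decide) (by decide))
  have T013 := ht 0 1 3 (d3 _ _ _ (by decide) (by decide) (by decide))
  have T014 := ht 0 1 4 (d3 _ _ _ (by decide) (by decide) (by decide))
  have T023 := ht 0 2 3 (d3 _ _ _ (by decide) (by decide) (by decide))
  have T024 := ht 0 2 4 (d3 _ _ _ (by decide) (by decide) (by decide))
  have T034 := ht 0 3 4 (d3 _ _ _ (by decide) (by decide) (by decide))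
  have T123 := ht 1 2 3 (d3 _ _ _ (by decide) (by decide) (by decide))
  have T124 := ht 1 2 4 (d3 _ _ _ (by decide) (by decide) (by decide))
  have T134 := ht 1 3 4 (d3 _ _ _ (by decide) (by decide) (by decide))
  have T234 := ht 2 3 4 (d3 _ _ _ (by decide) (by decide) (by decide))
  simp only [ip_sub, eL, eP0, eP1, eP2, eP3, eP4, eE01, eE02, eE03, eE04, eE12, eE13, eE14,
    eE23, eE24, eE34, ip_single, one_mul] at T012 T013 T014 T023 T024 T034 T123 T124 T134 T234
  rw [rho_eq]
  funext j
  fin_cases j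
  · show v 0 = v 6 * 3; linarith
  · show v 1 = v 6 * 0; linarith
  · show v 2 = v 6 * 0; linarith
  · show v 3 = v 6 * 0; linarith
  · show v 4 = v 6 * 0; linarith
  · show v 5 = v 6 * 0; linarith
  · show v 6 = v 6 * 1; linarith
  · show v 7 = v 6 * 1; linarith
  · show v 8 = v 6 * 1; linarith
  · show v 9 = v 6 * 1; linarith
  · show v 10 = v 6 * 1; linarith
  · show v 11 = v 6 * 1; linarith
  · show v 12 = v 6 * 1; linarith
  · show v 13 = v 6 * 1; linarith
  · show v 14 = v 6 * 1; linarith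
  · show v 15 = v 6 * 1; linarith

theorem rho1_coextremal :
    ρ₁ ∈ GammaDual ∧ SpansExtremalRay GammaDual ρ₁ ∧ ip Kcl ρ₁ = -2 := by
  have hKrho : ip Kcl ρ₁ = -2 := by
    rw [Kcl, sum_pairs, ip_add, ip_add, ip_neg, ip_smul, ip_smul, ip_eL_rho, ip_sumeP_rho]
    simp only [ip_add]
    rw [ip_eE_rho 0 1 (by decide), ip_eE_rho 0 2 (by decide), ip_eE_rho 0 3 (by decide),
      ip_eE_rho 0 4 (by decide), ip_eE_rho 1 2 (by decide), ip_eE_rho 1 3 (by decide),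
      ip_eE_rho 1 4 (by decide), ip_eE_rho 2 3 (by decide), ip_eE_rho 2 4 (by decide),
      ip_eE_rho 3 4 (by decide)]
    ring
  refine ⟨rho_mem, ⟨?_, rho_mem, ?_⟩, hKrho⟩
  · intro h
    have := congrFun h 0
    rw [rho_eq] at this
    have h3 : (3:ℝ) = 0 := this
    norm_num at h3
  · intro v₁ v₂ hv1 hv2 ⟨t, _, hsum⟩
    have main : ∀ v w : Fin 16 → ℝ, v ∈ GammaDual → w ∈ GammaDual → v + w = t • ρ₁ →
        ∃ s : ℝ, 0 ≤ s ∧ v = s • ρ₁ := by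
      intro v w hv hw hvw
      have tight : ∀ g ∈ Gamma, ip g ρ₁ = 0 → ip g v = 0 := by
        intro g hg h0
        have a := hv g hg
        have b := hw g hg
        have c : ip g v + ip g w = t * ip g ρ₁ := by
          rw [← ip_add_right, hvw, ip_smul_right]
        rw [h0, mul_zero] at c
        linarith
      have hp : ∀ i : Fin 5, ip (eP i) v = 0 :=
        fun i => tight _ (Or.inl ⟨i, rfl⟩) (ip_eP_rho i)
      have htr : ∀ k l m : Fin 5, Distinct3 k l m →
          ip (eL - eP k - eP l - eP m - eE k l - eE k m - eE l m) v = 0 :=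
        fun k l m hd => tight _ (Or.inr (Or.inr (Or.inl ⟨k, l, m, hd, rfl⟩))) (ip_triple_rho k l m hd)
      have h6 : 0 ≤ v 6 := by
        have := hv (eE 0 1) (Or.inr (Or.inl ⟨0, 1, by decide, rfl⟩))
        rwa [eE01, ip_single, one_mul] at this
      exact ⟨v 6, h6, key v hp htr⟩
    exact ⟨main v₁ v₂ hv1 hv2 hsum, main v₂ v₁ hv2 hv1 (by rwa [add_comm])⟩
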